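/- For a real polynomial p of degree at most n, Lagrange interpolation at the Chebyshev points of the second kind xⱼ = cos(jπ/n), j = 0,…,n, can be written in barycentric form: for x not equal to any xⱼ, p(x) = [∑_{j=0}^n (wⱼ/(x - xⱼ)) p(xⱼ)] / [∑_{j=0}^n wⱼ/(x - xⱼ)], where w₀ = 1/2, wₙ = (-1)ⁿ/2, and wⱼ = (-1)ʲ for 0 < j < n. -/

import Mathlib

open Real Finset Polynomial Polynomial.Chebyshev in
private lemma auxT_12 : ∀ m : ℕ, (T ℝ m).natDegree ≤ m ∧
    (T ℝ m).coeff m = (if m = 0 then 1 else 2^(m-1) : ℝ) := by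
  intro m
  induction m using Nat.strong_induction_on with
  | _ m ih =>
    match m with
    | 0 => simp [Polynomial.Chebyshev.T_zero]
    | 1 => simp [Polynomial.Chebyshev.T_one]
    | (k+2) =>
      obtain ⟨hd1, hc1⟩ := ih (k+1) (by omega)
      obtain ⟨hd0, hc0⟩ := ih k (by omega)
      have hrec : T ℝ ((k+2 : ℕ) : ℤ) = 2 * Polynomial.X * T ℝ ((k+1 : ℕ) : ℤ) - T ℝ (k : ℕ) := by
        push_cast
        exact Polynomial.Chebyshev.T_add_two ℝ k
      have h2 : (2 : ℝ[X]) = Polynomial.C 2 := (map_ofNat Polynomial.C 2).symm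
      constructor
      · rw [hrec]
        refine (natDegree_sub_le _ _).trans (max_le ?_ (hd0.trans (by omega)))
        refine natDegree_mul_le.trans ?_
        have : (2 * Polynomial.X : ℝ[X]).natDegree ≤ 1 :=
          natDegree_mul_le.trans (by simp)
        omega
      · rw [hrec, Polynomial.coeff_sub, coeff_eq_zero_of_natDegree_lt (by omega : (T ℝ (k:ℕ)).natDegree < k + 2),
          sub_zero, mul_assoc, h2, Polynomial.coeff_C_mul, show k + 2 = (k+1) + 1 from rfl,
          Polynomial.coeff_X_mul, hc1]
        simp
        norm_num [pow_succ]
        ring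

open Real Finset Polynomial Polynomial.Chebyshev in
private lemma auxU_12 : ∀ m : ℕ, (U ℝ m).eval 1 = m + 1 ∧ (U ℝ m).eval (-1) = (-1)^m * (m + 1) := by
  intro m
  induction m using Nat.strong_induction_on with
  | _ m ih =>
    match m with
    | 0 => simp [Polynomial.Chebyshev.U_zero]
    | 1 => norm_num [Polynomial.Chebyshev.U_one]
    | (k+2) =>
      obtain ⟨h11, h12⟩ := ih (k+1) (by omega)
      obtain ⟨h01, h02⟩ := ih k (by omega)
      have hrec : U ℝ ((k+2 : ℕ) : ℤ) = 2 * Polynomial.X * U ℝ ((k+1 : ℕ) : ℤ) - U ℝ (k : ℕ) := by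
        push_cast
        exact Polynomial.Chebyshev.U_add_two ℝ k
      rw [hrec]
      simp only [Polynomial.eval_sub, Polynomial.eval_mul, Polynomial.eval_ofNat,
        Polynomial.eval_X, h11, h12, h01, h02]
      push_cast
      constructor
      · ring
      · rw [pow_succ, pow_succ]
        ring

open Real Finset Polynomial Polynomial.Chebyshev in
private lemma auxInj_12 (n : ℕ) (hn : 1 ≤ n) (X : ℕ → ℝ) (hX : ∀ j, X j = Real.cos (j * π / n)) :
    Set.InjOn X (Finset.range (n+1)) := by
  have hn0 : (0:ℝ) < n := by exact_mod_cast hn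
  have key : ∀ {i j : ℕ}, i < j → j ≤ n → X j < X i := by
    intro i j hij hjn
    rw [hX, hX]
    apply Real.cos_lt_cos_of_nonneg_of_le_pi
    · positivity
    · rw [div_le_iff₀ hn0]
      have : (j:ℝ) ≤ n := by exact_mod_cast hjn
      nlinarith [Real.pi_pos]
    · have hij' : (i:ℝ) < j := by exact_mod_cast hij
      have hpi := Real.pi_pos
      gcongr
  intro a ha b hb hab
  simp only [Finset.coe_range, Set.mem_Iio] at ha hb
  rcases Nat.lt_trichotomy a b with h | h | h
  · exact absurd hab (ne_of_gt (key h (by omega)))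
  · exact h
  · exact absurd hab (ne_of_lt (key h (by omega)))

open Real Finset Polynomial Polynomial.Chebyshev in
private lemma auxFact_12 (n : ℕ) (hn : 1 ≤ n) (X : ℕ → ℝ) (hX : ∀ j, X j = Real.cos (j * π / n)) :
    T ℝ ((n:ℤ)+1) - T ℝ ((n:ℤ)-1) =
      Polynomial.C ((2:ℝ)^n) * Lagrange.nodal (Finset.range (n+1)) X := by
  have hn0 : (n:ℝ) ≠ 0 := by positivity
  set s := Finset.range (n+1) with hs
  set P := Lagrange.nodal s X with hP
  set q := T ℝ ((n:ℤ)+1) - T ℝ ((n:ℤ)-1) with hq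
  have hndP : P.natDegree = n + 1 := by
    rw [hP, Lagrange.natDegree_nodal, hs, Finset.card_range]
  have hmonP : P.Monic := Lagrange.nodal_monic
  have h1 : T ℝ ((n:ℤ)+1) = T ℝ ((n+1 : ℕ) : ℤ) := by norm_num
  have h2 : T ℝ ((n:ℤ)-1) = T ℝ ((n-1 : ℕ) : ℤ) := by
    congr 1
    omega
  have hcoeff : ∀ m : ℕ, n < m → (q - Polynomial.C ((2:ℝ)^n) * P).coeff m = 0 := by
    intro m hm
    rw [Polynomial.coeff_sub, hq, Polynomial.coeff_sub, Polynomial.coeff_C_mul, h1, h2]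
    have hT2 : (T ℝ ((n-1 : ℕ) : ℤ)).coeff m = 0 :=
      Polynomial.coeff_eq_zero_of_natDegree_lt (lt_of_le_of_lt (auxT_12 (n-1)).1 (by omega))
    rcases eq_or_ne m (n+1) with rfl | hne
    · have hPc : P.coeff (n+1) = 1 := by
        rw [← hndP]; exact hmonP.coeff_natDegree
      rw [hT2, (auxT_12 (n+1)).2, hPc]
      simp
    · have hT1 : (T ℝ ((n+1 : ℕ) : ℤ)).coeff m = 0 :=
        Polynomial.coeff_eq_zero_of_natDegree_lt (lt_of_le_of_lt (auxT_12 (n+1)).1 (by omega))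
      have hPm : P.coeff m = 0 :=
        Polynomial.coeff_eq_zero_of_natDegree_lt (by omega)
      rw [hT1, hT2, hPm]
      ring
  have heval : ∀ j ∈ s, (q - Polynomial.C ((2:ℝ)^n) * P).eval (X j) = 0 := by
    intro j hjs
    have hj : j ≤ n := by simpa [hs, Nat.lt_succ_iff] using hjs
    have hPj : P.eval (X j) = 0 := Lagrange.eval_nodal_at_node hjs
    have hqj : q.eval (X j) = 0 := by
      rw [hq, Polynomial.eval_sub, hX j, Polynomial.Chebyshev.T_real_cos,
        Polynomial.Chebyshev.T_real_cos]
      push_cast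
      have e1 : ((n:ℝ)+1) * ((j:ℝ) * π / n) = (j:ℝ) * π + (j:ℝ) * π / n := by
        field_simp
      have e2 : ((n:ℝ)-1) * ((j:ℝ) * π / n) = (j:ℝ) * π - (j:ℝ) * π / n := by
        field_simp
      rw [e1, e2, Real.cos_add, Real.cos_sub, Real.sin_nat_mul_pi]
      ring
    simp [hqj, hPj]
  have hdeg : (q - Polynomial.C ((2:ℝ)^n) * P).natDegree ≤ n :=
    Polynomial.natDegree_le_iff_coeff_eq_zero.mpr hcoeff
  have hz : q - Polynomial.C ((2:ℝ)^n) * P = 0 := by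
    apply Polynomial.eq_zero_of_degree_lt_of_eval_index_eq_zero s (auxInj_12 n hn X hX) ?_ heval
    calc (q - Polynomial.C ((2:ℝ)^n) * P).degree
        ≤ ((q - Polynomial.C ((2:ℝ)^n) * P).natDegree : WithBot ℕ) := Polynomial.degree_le_natDegree
      _ < (#s : WithBot ℕ) := by
          rw [hs, Finset.card_range]
          exact_mod_cast Nat.lt_succ_of_le hdeg
  exact sub_eq_zero.mp hz

open Real Finset Polynomial Polynomial.Chebyshev in
private lemma auxE_12 (n : ℕ) (hn : 1 ≤ n) (X : ℕ → ℝ) (hX : ∀ j, X j = Real.cos (j * π / n))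
    (j : ℕ) (hj : j ≤ n) :
    Polynomial.eval (X j) (Polynomial.derivative (T ℝ ((n:ℤ)+1) - T ℝ ((n:ℤ)-1))) =
      (-1)^j * (2*n) * (if j = 0 ∨ j = n then 2 else 1) := by
  have hn0 : (n:ℝ) ≠ 0 := by positivity
  have hder : Polynomial.derivative (T ℝ ((n:ℤ)+1) - T ℝ ((n:ℤ)-1)) =
      (((n:ℤ)+1 : ℤ) : ℝ[X]) * U ℝ (n:ℤ) - (((n:ℤ)-1 : ℤ) : ℝ[X]) * U ℝ ((n:ℤ)-2) := by
    rw [Polynomial.derivative_sub, Polynomial.Chebyshev.T_derivative_eq_U,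
      Polynomial.Chebyshev.T_derivative_eq_U,
      show (n:ℤ)+1-1 = (n:ℤ) by ring, show (n:ℤ)-1-1 = (n:ℤ)-2 by ring]
  rw [hder]
  simp only [Polynomial.eval_sub, Polynomial.eval_mul, Polynomial.eval_intCast]
  push_cast
  rcases eq_or_ne j 0 with rfl | hj0
  · have hX0 : X 0 = 1 := by rw [hX]; norm_num
    rw [if_pos (Or.inl rfl), hX0]
    have hU1 : (U ℝ ((n:ℕ) : ℤ)).eval 1 = n + 1 := (auxU_12 n).1
    rcases eq_or_ne n 1 with rfl | hn1
    · norm_num [hU1]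
    · have h2n : 2 ≤ n := by omega
      have hc : ((n:ℤ) - 2) = ((n - 2 : ℕ) : ℤ) := by omega
      have hU2 : (U ℝ ((n:ℤ)-2)).eval 1 = (n - 2 : ℕ) + 1 := by rw [hc]; exact (auxU_12 (n-2)).1
      rw [hU1, hU2]
      have : ((n - 2 : ℕ) : ℝ) = (n:ℝ) - 2 := by
        push_cast [Nat.cast_sub h2n]; ring
      rw [this]; ring
  rcases eq_or_ne j n with rfl | hjn
  · have hXn : X j = -1 := by
      rw [hX]
      have : (j:ℝ) * π / j = π := by field_simp
      rw [this]
      exact Real.cos_pi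
    rw [if_pos (Or.inr rfl), hXn]
    have hU1 : (U ℝ ((j:ℕ) : ℤ)).eval (-1) = (-1)^j * (j + 1) := (auxU_12 j).2
    rcases eq_or_ne j 1 with rfl | hn1
    · norm_num [hU1]
    · have h2n : 2 ≤ j := by omega
      have hc : ((j:ℤ) - 2) = ((j - 2 : ℕ) : ℤ) := by omega
      have hU2 : (U ℝ ((j:ℤ)-2)).eval (-1) = (-1)^(j-2 : ℕ) * ((j - 2 : ℕ) + 1) := by
        rw [hc]; exact (auxU_12 (j-2)).2
      have hsgn : ((-1:ℝ))^(j-2 : ℕ) = (-1)^j := by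
        rw [show j = (j - 2) + 2 by omega, pow_add]
        norm_num
      have hcast : ((j - 2 : ℕ) : ℝ) = (j:ℝ) - 2 := by
        push_cast [Nat.cast_sub h2n]; ring
      rw [hU1, hU2, hsgn, hcast]
      ring
  · have hsin : 0 < Real.sin ((j:ℝ) * π / n) := by
      apply Real.sin_pos_of_pos_of_lt_pi
      · have : (0:ℝ) < (j:ℝ) := by exact_mod_cast Nat.pos_of_ne_zero hj0
        have := Real.pi_pos
        positivity
      · have hjn' : (j:ℝ) < n := by exact_mod_cast lt_of_le_of_ne hj hjn
        rw [div_lt_iff₀ (by positivity)]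
        nlinarith [Real.pi_pos]
    rw [if_neg (by tauto)]
    set θ := (j:ℝ) * π / n with hθ
    have hU1 : (U ℝ ((n:ℕ) : ℤ)).eval (X j) * Real.sin θ = Real.sin (((n:ℝ)+1) * θ) := by
      rw [hX]
      have := Polynomial.Chebyshev.U_real_cos θ (n : ℤ)
      push_cast at this ⊢
      exact this
    have hU2 : (U ℝ ((n:ℤ)-2)).eval (X j) * Real.sin θ = Real.sin (((n:ℝ)-1) * θ) := by
      rw [hX]
      have := Polynomial.Chebyshev.U_real_cos θ ((n : ℤ) - 2)
      push_cast at this ⊢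
      rw [this]
      congr 1
      ring
    have e1 : ((n:ℝ)+1) * θ = (j:ℝ) * π + θ := by rw [hθ]; field_simp
    have e2 : ((n:ℝ)-1) * θ = (j:ℝ) * π - θ := by rw [hθ]; field_simp
    have hcosj : Real.cos ((j:ℝ) * π) = (-1)^j := by
      have := Real.cos_nat_mul_pi_sub 0 j
      simpa using this
    apply mul_right_cancel₀ (ne_of_gt hsin)
    have expand : (((n:ℝ) + 1) * Polynomial.eval (X j) (U ℝ (n:ℤ)) -
        ((n:ℝ) - 1) * Polynomial.eval (X j) (U ℝ ((n:ℤ)-2))) * Real.sin θ =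
        ((n:ℝ)+1) * Real.sin (((n:ℝ)+1) * θ) - ((n:ℝ)-1) * Real.sin (((n:ℝ)-1) * θ) := by
      rw [← hU1, ← hU2]; ring
    rw [expand, e1, e2, Real.sin_add, Real.sin_sub, Real.sin_nat_mul_pi, hcosj]
    ring

open Real Finset

theorem stmt_12 (n : ℕ) (hn : 1 ≤ n) (p : Polynomial ℝ) (hdeg : p.natDegree ≤ n)
    (X : ℕ → ℝ) (hX : ∀ j, X j = Real.cos (j * π / n))
    (w : ℕ → ℝ)
    (hw : ∀ j ≤ n, w j = if j = 0 then 1/2 else if j = n then (-1 : ℝ) ^ n / 2 else (-1 : ℝ) ^ j)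
    (x : ℝ) (hx : ∀ j ≤ n, x ≠ X j) :
    p.eval x = (∑ j ∈ Finset.range (n + 1), w j / (x - X j) * p.eval (X j))
      / (∑ j ∈ Finset.range (n + 1), w j / (x - X j)) := by
  classical
  set s := Finset.range (n+1) with hs
  have hinj : Set.InjOn X s := auxInj_12 n hn X hX
  have hn0 : (0:ℝ) < n := by exact_mod_cast hn
  set c : ℝ := 2 * n / 2^n with hc
  have hcne : c ≠ 0 := by
    rw [hc]; positivity
  -- the weights are proportional to the nodal weights
  have hwl : ∀ j ∈ s, w j = c * Lagrange.nodalWeight s X j := by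
    intro j hjs
    have hj : j ≤ n := by simpa [hs, Nat.lt_succ_iff] using hjs
    have hD : Polynomial.eval (X j) (Polynomial.derivative (Lagrange.nodal s X)) =
        (-1)^j * (2*n) * (if j = 0 ∨ j = n then 2 else 1) / 2^n := by
      have hfact := auxFact_12 n hn X hX
      have hder : Polynomial.derivative (Polynomial.Chebyshev.T ℝ ((n:ℤ)+1)
            - Polynomial.Chebyshev.T ℝ ((n:ℤ)-1)) =
          Polynomial.C ((2:ℝ)^n) * Polynomial.derivative (Lagrange.nodal s X) := by
        rw [hfact, Polynomial.derivative_C_mul]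
      have hE := auxE_12 n hn X hX j hj
      rw [hder] at hE
      simp only [Polynomial.eval_mul, Polynomial.eval_C] at hE
      field_simp at hE ⊢
      linarith [hE]
    rw [Lagrange.nodalWeight_eq_eval_derivative_nodal hjs, hD, hw j hj]
    have h2n : (2:ℝ)^n ≠ 0 := by positivity
    have hsj : ((-1:ℝ))^j * (-1)^j = 1 := by
      rw [← pow_add, show j + j = 2*j by ring, pow_mul]
      norm_num
    rcases eq_or_ne j 0 with rfl | hj0
    · rw [if_pos rfl, if_pos (Or.inl rfl)]
      norm_num
      rw [hc]
      field_simp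
    rcases eq_or_ne j n with rfl | hjn
    · rw [if_neg hj0, if_pos rfl, if_pos (Or.inr rfl)]
      rw [hc]
      field_simp
      nlinarith [hsj, hn0]
    · rw [if_neg hj0, if_neg hjn, if_neg (by tauto)]
      rw [hc]
      field_simp
      nlinarith [hsj, hn0]
  -- barycentric formula from mathlib
  have hxne : ∀ i ∈ s, x ≠ X i := by
    intro i hi
    exact hx i (by simpa [hs, Nat.lt_succ_iff] using hi)
  have hdlt : p.degree < (#s : WithBot ℕ) := by
    calc p.degree ≤ (p.natDegree : WithBot ℕ) := Polynomial.degree_le_natDegree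
      _ < (#s : WithBot ℕ) := by
          rw [hs, Finset.card_range]
          exact_mod_cast Nat.lt_succ_of_le hdeg
  have hbary : p.eval x =
      (∑ i ∈ s, Lagrange.nodalWeight s X i * (x - X i)⁻¹ * p.eval (X i)) /
        ∑ i ∈ s, Lagrange.nodalWeight s X i * (x - X i)⁻¹ := by
    conv_lhs => rw [Lagrange.eq_interpolate hinj hdlt]
    exact Lagrange.eval_interpolate_not_at_node' _ hinj ⟨0, by simp [hs]⟩ hxne
  have hnum : ∑ j ∈ s, w j / (x - X j) * p.eval (X j) =
      c * ∑ i ∈ s, Lagrange.nodalWeight s X i * (x - X i)⁻¹ * p.eval (X i) := by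
    rw [Finset.mul_sum]
    refine Finset.sum_congr rfl fun j hj => ?_
    rw [hwl j hj, div_eq_mul_inv]
    ring
  have hden : ∑ j ∈ s, w j / (x - X j) =
      c * ∑ i ∈ s, Lagrange.nodalWeight s X i * (x - X i)⁻¹ := by
    rw [Finset.mul_sum]
    refine Finset.sum_congr rfl fun j hj => ?_
    rw [hwl j hj, div_eq_mul_inv]
    ring
  rw [hnum, hden, mul_div_mul_left _ _ hcne, hbary]
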